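/- In an SP-structure satisfying Symmetry, Non-negativity, Boundedness, O-Projection, and Factorization, the intersection of any two subspaces is a subspace. -/

import Mathlib

variable {Ω : Type*}

def IsOrtho (p : Ω → Ω → ℝ) (A : Set Ω) : Prop :=
  ∀ x ∈ A, ∀ y ∈ A, x ≠ y → p x y = 0

noncomputable def pSet (p : Ω → Ω → ℝ) (x : Ω) (A : Set Ω) : ℝ :=
  ∑' a : A, p x a

def Symm (p : Ω → Ω → ℝ) : Prop := ∀ x y, p x y = p y x

def Nonneg (p : Ω → Ω → ℝ) : Prop := ∀ x y, 0 ≤ p x y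

def Bounded (p : Ω → Ω → ℝ) : Prop :=
  ∀ (x : Ω) (A : Set Ω), IsOrtho p A →
    Summable (fun a : A => p x a) ∧ pSet p x A ≤ 1

def OProj (p : Ω → Ω → ℝ) : Prop :=
  ∀ (x : Ω) (A : Set Ω), IsOrtho p A → pSet p x A < 1 →
    ∃ y, pSet p y A = 0 ∧ pSet p x A + p x y = 1

def Factor (p : Ω → Ω → ℝ) : Prop :=
  ∀ (x y z : Ω) (A : Set Ω), IsOrtho p A → pSet p y A = 1 → pSet p z A = 1 →
    p x y = pSet p x A → p x z = p x y * p y z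

def Subgen (p : Ω → Ω → ℝ) (A : Set Ω) : Set Ω := {x | pSet p x A = 1}

def IsSubspace (p : Ω → Ω → ℝ) (X : Set Ω) : Prop :=
  ∃ A, IsOrtho p A ∧ X = Subgen p A

def Standard (p : Ω → Ω → ℝ) : Prop := ∀ x y, p x y = 1 → x = y


section SPaux

variable {p : Ω → Ω → ℝ}

/-- The orthogonal complement of a set. -/
def SPperp (p : Ω → Ω → ℝ) (S : Set Ω) : Set Ω := {w | ∀ s ∈ S, p w s = 0}

lemma pSet_eq_zero_iff (h2 : Nonneg p) {x : Ω} {A : Set Ω}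
    (hsum : Summable (fun a : A => p x a)) :
    pSet p x A = 0 ↔ ∀ a ∈ A, p x a = 0 := by
  constructor
  · intro h0 a ha
    have hle : p x a ≤ pSet p x A :=
      Summable.le_tsum hsum ⟨a, ha⟩ (fun j _ => h2 x j)
    have := h2 x a
    linarith [hle, h0 ▸ hle]
  · intro h
    have : (fun a : A => p x a) = fun _ => 0 := by
      funext a; exact h a a.2
    simp [pSet, this]

lemma isOrtho_singleton (x : Ω) : IsOrtho p ({x} : Set Ω) := by
  intro a ha b hb hab
  simp only [Set.mem_singleton_iff] at ha hb
  exact absurd (ha.trans hb.symm) hab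

lemma pSet_singleton (x a : Ω) : pSet p x ({a} : Set Ω) = p x a := by
  simpa [pSet] using tsum_singleton a (p x)

/-- Every point has transition probability 1 with itself. -/
lemma p_self (h1 : Symm p) (h3 : Bounded p) (h4 : OProj p) (x : Ω) : p x x = 1 := by
  by_contra hne
  have hle : pSet p x ({x} : Set Ω) ≤ 1 := (h3 x _ (isOrtho_singleton x)).2
  rw [pSet_singleton] at hle
  have hlt : pSet p x ({x} : Set Ω) < 1 := by
    rw [pSet_singleton]; exact lt_of_le_of_ne hle hne
  obtain ⟨z, hz0, hz1⟩ := h4 x _ (isOrtho_singleton x) hlt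
  rw [pSet_singleton] at hz0 hz1
  rw [h1 x z, hz0] at hz1
  exact hne (by linarith)

lemma mem_perp_iff_pSet_zero (h1 : Symm p) (h2 : Nonneg p) (h3 : Bounded p)
    {A : Set Ω} (hA : IsOrtho p A) (w : Ω) :
    w ∈ SPperp p A ↔ pSet p w A = 0 := by
  rw [pSet_eq_zero_iff h2 (h3 w A hA).1]
  rfl

lemma perp_antitone {S T : Set Ω} (h : S ⊆ T) : SPperp p T ⊆ SPperp p S :=
  fun w hw s hs => hw s (h hs)

lemma subset_perp_perp (h1 : Symm p) (S : Set Ω) : S ⊆ SPperp p (SPperp p S) :=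
  fun s hs w hw => by rw [h1]; exact hw s hs

lemma perp_perp_perp (h1 : Symm p) (S : Set Ω) :
    SPperp p (SPperp p (SPperp p S)) = SPperp p S :=
  Set.Subset.antisymm (perp_antitone (subset_perp_perp h1 S))
    (subset_perp_perp h1 (SPperp p S))

lemma pSet_insert (h3 : Bounded p) {A : Set Ω} (hA : IsOrtho p A) {y : Ω}
    (hy : y ∉ A) (x : Ω) :
    pSet p x (insert y A) = p x y + pSet p x A := by
  have hdisj : Disjoint ({y} : Set Ω) A := Set.disjoint_singleton_left.mpr hy
  have hs : Summable ((p x) ∘ (Subtype.val : ({y} : Set Ω) → Ω)) := .of_finite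
  have ht : Summable ((p x) ∘ (Subtype.val : A → Ω)) := (h3 x A hA).1
  have := Summable.tsum_union_disjoint (f := p x) hdisj hs ht
  have hins : insert y A = ({y} : Set Ω) ∪ A := Set.insert_eq y A
  calc pSet p x (insert y A) = ∑' (a : ↑(({y} : Set Ω) ∪ A)), p x a := by rw [pSet, hins]
    _ = (∑' (a : ({y} : Set Ω)), p x a) + ∑' (a : A), p x a := this
    _ = p x y + pSet p x A := by rw [tsum_singleton y (p x)]; rfl

lemma isOrtho_insert (h1 : Symm p) {A : Set Ω} (hA : IsOrtho p A) {y : Ω}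
    (hy : ∀ a ∈ A, p y a = 0) : IsOrtho p (insert y A) := by
  intro a ha b hb hab
  rcases ha with rfl | ha
  · rcases hb with rfl | hb
    · exact absurd rfl hab
    · exact hy b hb
  · rcases hb with rfl | hb
    · rw [h1]; exact hy a ha
    · exact hA a ha b hb hab

/-- A generated subspace is the double orthocomplement of its generating ortho-set. -/
lemma subgen_eq_perp_perp (h1 : Symm p) (h2 : Nonneg p) (h3 : Bounded p)
    (h4 : OProj p) {A : Set Ω} (hA : IsOrtho p A) :
    Subgen p A = SPperp p (SPperp p A) := by
  ext x
  constructor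
  · intro hx w hw
    -- w ∈ SPperp p A, so A ∪ {w} is ortho
    have hwA : w ∉ A := by
      intro hmem
      have := hw w hmem
      rw [p_self h1 h3 h4 w] at this
      norm_num at this
    have hortho : IsOrtho p (insert w A) := isOrtho_insert h1 hA hw
    have hle := (h3 x _ hortho).2
    rw [pSet_insert h3 hA hwA x] at hle
    have hx1 : pSet p x A = 1 := hx
    have hnn := h2 x w
    have : p x w = 0 := by linarith
    exact this
  · intro hx
    show pSet p x A = 1
    by_contra hne
    have hle : pSet p x A ≤ 1 := (h3 x A hA).2
    have hlt : pSet p x A < 1 := lt_of_le_of_ne hle hne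
    obtain ⟨y, hy0, hy1⟩ := h4 x A hA hlt
    have hyperp : y ∈ SPperp p A := (mem_perp_iff_pSet_zero h1 h2 h3 hA y).2 hy0
    have : p x y = 0 := hx y hyperp
    rw [this] at hy1
    exact hne (by linarith)

/-- The orthocomplement of any set is a subspace. -/
lemma perp_isSubspace (h1 : Symm p) (h2 : Nonneg p) (h3 : Bounded p)
    (h4 : OProj p) (h5 : Factor p) (S : Set Ω) : IsSubspace p (SPperp p S) := by
  -- take a maximal ortho subset C of SPperp p S
  obtain ⟨C, hCmax⟩ := zorn_subset {C : Set Ω | C ⊆ SPperp p S ∧ IsOrtho p C} (by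
    intro c hc hchain
    refine ⟨⋃₀ c, ⟨?_, ?_⟩, fun s hs => Set.subset_sUnion_of_mem hs⟩
    · intro w hw
      obtain ⟨t, htc, hwt⟩ := hw
      exact (hc htc).1 hwt
    · intro a ha b hb hab
      obtain ⟨ta, htac, hata⟩ := ha
      obtain ⟨tb, htbc, hbtb⟩ := hb
      rcases hchain.total htac htbc with hsub | hsub
      · exact (hc htbc).2 a (hsub hata) b hbtb hab
      · exact (hc htac).2 a hata b (hsub hbtb) hab)
  obtain ⟨⟨hCS, hCortho⟩, hmax⟩ := hCmax
  refine ⟨C, hCortho, ?_⟩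
  ext x
  constructor
  · -- SPperp p S ⊆ Subgen p C
    intro hx
    show pSet p x C = 1
    by_contra hne
    have hle : pSet p x C ≤ 1 := (h3 x C hCortho).2
    have hlt : pSet p x C < 1 := lt_of_le_of_ne hle hne
    obtain ⟨y, hy0, hy1⟩ := h4 x C hCortho hlt
    have hyC : ∀ c ∈ C, p y c = 0 :=
      (pSet_eq_zero_iff h2 (h3 y C hCortho).1).1 hy0
    have hyCmem : y ∉ C := by
      intro hmem
      have := hyC y hmem
      rw [p_self h1 h3 h4 y] at this
      norm_num at this
    have hortho' : IsOrtho p (insert y C) := isOrtho_insert h1 hCortho hyC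
    have hxC' : pSet p x (insert y C) = 1 := by
      rw [pSet_insert h3 hCortho hyCmem x]; linarith
    have hyC' : pSet p y (insert y C) = 1 := by
      rw [pSet_insert h3 hCortho hyCmem y, p_self h1 h3 h4 y, hy0]; ring
    have hpxy : 0 < p x y := by linarith
    -- show y ∈ SPperp p S
    have hyS : y ∈ SPperp p S := by
      intro s hs
      have hsx : p s x = 0 := by rw [h1]; exact hx s hs
      have hsC : ∀ c ∈ C, p s c = 0 := by
        intro c hc
        rw [h1]; exact hCS hc s hs
      have hsC' : p s y = pSet p s (insert y C) := by
        rw [pSet_insert h3 hCortho hyCmem s,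
          (pSet_eq_zero_iff h2 (h3 s C hCortho).1).2 hsC]; ring
      have := h5 s y x (insert y C) hortho' hyC' hxC' hsC'
      rw [hsx] at this
      have hyx : 0 < p y x := by rw [h1 y x]; exact hpxy
      rcases mul_eq_zero.1 this.symm with h | h
      · rw [h1]; exact h
      · exact absurd h (ne_of_gt hyx)
    -- contradiction with maximality
    have : insert y C ⊆ C := hmax ⟨Set.insert_subset hyS hCS, hortho'⟩
      (Set.subset_insert y C)
    exact hyCmem (this (Set.mem_insert y C))
  · -- Subgen p C ⊆ SPperp p S
    intro hx
    have h1' : Subgen p C = SPperp p (SPperp p C) :=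
      subgen_eq_perp_perp h1 h2 h3 h4 hCortho
    rw [h1'] at hx
    have : SPperp p (SPperp p C) ⊆ SPperp p (SPperp p (SPperp p S)) :=
      perp_antitone (perp_antitone hCS)
    rw [perp_perp_perp h1] at this
    exact this hx

end SPaux

theorem stmt12 (p : Ω → Ω → ℝ) (h1 : Symm p) (h2 : Nonneg p) (h3 : Bounded p)
    (h4 : OProj p) (h5 : Factor p) (X Y : Set Ω)
    (hX : IsSubspace p X) (hY : IsSubspace p Y) :
    IsSubspace p (X ∩ Y) := by
  obtain ⟨A, hA, rfl⟩ := hX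
  obtain ⟨B, hB, rfl⟩ := hY
  have hXA : Subgen p A = SPperp p (SPperp p A) := subgen_eq_perp_perp h1 h2 h3 h4 hA
  have hYB : Subgen p B = SPperp p (SPperp p B) := subgen_eq_perp_perp h1 h2 h3 h4 hB
  have hinter : Subgen p A ∩ Subgen p B = SPperp p (SPperp p A ∪ SPperp p B) := by
    rw [hXA, hYB]
    ext x
    constructor
    · rintro ⟨hxa, hxb⟩ s hs
      rcases hs with hs | hs
      · exact hxa s hs
      · exact hxb s hs
    · intro hx
      exact ⟨fun s hs => hx s (Or.inl hs), fun s hs => hx s (Or.inr hs)⟩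
  rw [hinter]
  exact perp_isSubspace h1 h2 h3 h4 h5 _
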